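/- arXiv:1701.05113 — 8 statements merged into one kernel-verified Lean document; each statement's English description precedes it below -/
import Mathlib

section
/- Let A_0, A_1 be 0-1 matrices indexed by a finite alphabet A. The vertex tree-shift X_{A_0,A_1} is nonempty if and only if A_0 and A_1 simultaneously contain essential submatrices, i.e., there exists a nonempty subset A' ⊆ A such that for every a ∈ A' there exist b, c ∈ A' with A_0(a,b) = 1 and A_1(a,c) = 1. -/
/-- Words over the binary alphabet Σ = {0,1}, encoded as lists of booleans
(0 ↦ `false`, 1 ↦ `true`).  Concatenation of words is list append. -/
abbrev Word : Type := List Bool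

/-- An infinite tree over the alphabet `A`: a labeling of Σ* by `A`. -/
abbrev ITree (A : Type) : Type := Word → A

/-- The shift map σ_w, given by (σ_w t)(x) = t(wx). -/
def shiftW {A : Type} (w : Word) (t : ITree A) : ITree A := fun x => t (w ++ x)

/-- A pattern: a support (set of nodes) together with labels.  Only the values
of `val` on `supp` are relevant. -/
structure Pattern (A : Type) where
  supp : Set Word
  val : Word → A

/-- The support of a pattern is prefix-closed. -/
def Pattern.PrefixClosed {A : Type} (u : Pattern A) : Prop :=
  ∀ x ∈ u.supp, ∀ y : Word, y <+: x → y ∈ u.supp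

/-- A leaf of a pattern: a node of the support none of whose children lies in
the support. -/
def Pattern.IsLeaf {A : Type} (u : Pattern A) (w : Word) : Prop :=
  w ∈ u.supp ∧ ∀ i : Bool, w ++ [i] ∉ u.supp

/-- The pattern `u` is accepted by the tree `t` (rooted at some node `x`). -/
def AcceptedBy {A : Type} (u : Pattern A) (t : ITree A) : Prop :=
  ∃ x : Word, ∀ y ∈ u.supp, u.val y = t (x ++ y)

/-- The pattern `u` is accepted by some tree of `X`. -/
def AcceptedIn {A : Type} (X : Set (ITree A)) (u : Pattern A) : Prop :=
  ∃ t ∈ X, AcceptedBy u t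

/-- The set of trees avoiding every pattern of the forbidden set `F`. -/
def treeShiftOf {A : Type} (F : Set (Pattern A)) : Set (ITree A) :=
  { t | ∀ u ∈ F, ¬ AcceptedBy u t }

/-- A tree-shift: a set of trees of the form `X_F` for a set `F` of finite
(prefix-closed) patterns. -/
def IsTreeShift {A : Type} (X : Set (ITree A)) : Prop :=
  ∃ F : Set (Pattern A), (∀ u ∈ F, u.supp.Finite ∧ u.PrefixClosed) ∧ X = treeShiftOf F

/-- A complete prefix code: a finite set of nonempty words, none a prefix of
another, such that every word of length ≥ max{|p| : p ∈ P} has a prefix in P. -/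
def IsCPC (P : Finset Word) : Prop :=
  ([] : Word) ∉ P ∧
  (∀ p ∈ P, ∀ q ∈ P, p <+: q → p = q) ∧
  (∀ x : Word, P.sup List.length ≤ x.length → ∃ p ∈ P, p <+: x)

/-- Σ^k, the set of all words of length k, as a finite set. -/
def fullCode (k : ℕ) : Finset Word :=
  Finset.image (fun f : Fin k → Bool => List.ofFn f) Finset.univ

/-- Σ_{n-1}: the set of all words of length < n (i.e. length ≤ n-1). -/
def sigmaLt (n : ℕ) : Set Word := { x : Word | x.length < n }

/-- An n-block of `X`: a pattern with support Σ_{n-1} accepted by some tree of `X`. -/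
def IsNBlock {A : Type} (X : Set (ITree A)) (n : ℕ) (u : Pattern A) : Prop :=
  u.supp = sigmaLt n ∧ AcceptedIn X u

/-- A (finite, prefix-closed) pattern accepted by some tree of `X`. -/
def GoodPattern {A : Type} (X : Set (ITree A)) (u : Pattern A) : Prop :=
  u.supp.Finite ∧ u.PrefixClosed ∧ AcceptedIn X u

/-- Patterns `u`, `v` are connected through `P` in `X`: there is `t ∈ X`
agreeing with `u` on its support and with a copy of `v` rooted at `wx` for
every leaf `w` of `u` and every `x ∈ P`. -/
def ConnectedThrough {A : Type} (X : Set (ITree A)) (P : Finset Word) (u v : Pattern A) : Prop :=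
  ∃ t ∈ X, (∀ y ∈ u.supp, t y = u.val y) ∧
    ∀ w : Word, u.IsLeaf w → ∀ x ∈ P, ∀ y ∈ v.supp, t (w ++ x ++ y) = v.val y

/-- Block gluing: a single CPC connects any two n-blocks, for every n. -/
def BlockGluing {A : Type} (X : Set (ITree A)) : Prop :=
  ∃ P : Finset Word, IsCPC P ∧ ∀ n : ℕ, ∀ u v : Pattern A,
    IsNBlock X n u → IsNBlock X n v → ConnectedThrough X P u v

/-- Uniformly block gluing: the CPC can be taken of the form Σ^k. -/
def UniformlyBlockGluing {A : Type} (X : Set (ITree A)) : Prop :=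
  ∃ k : ℕ, IsCPC (fullCode k) ∧ ∀ n : ℕ, ∀ u v : Pattern A,
    IsNBlock X n u → IsNBlock X n v → ConnectedThrough X (fullCode k) u v

/-- Strongly irreducible: a single CPC connects any two accepted patterns. -/
def StronglyIrreducible {A : Type} (X : Set (ITree A)) : Prop :=
  ∃ P : Finset Word, IsCPC P ∧ ∀ u v : Pattern A,
    GoodPattern X u → GoodPattern X v → ConnectedThrough X P u v

/-- Uniformly strongly irreducible: the CPC can be taken of the form Σ^k. -/
def UniformlyStronglyIrreducible {A : Type} (X : Set (ITree A)) : Prop :=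
  ∃ k : ℕ, IsCPC (fullCode k) ∧ ∀ u v : Pattern A,
    GoodPattern X u → GoodPattern X v → ConnectedThrough X (fullCode k) u v

/-- A leaf of a set of nodes. -/
def SetLeaf (L : Set Word) (w : Word) : Prop := w ∈ L ∧ ∀ i : Bool, w ++ [i] ∉ L

/-- Topological mixing. -/
def TopologicallyMixing {A : Type} (X : Set (ITree A)) : Prop :=
  ∀ L1 L2 : Set Word, L1.Finite → L2.Finite →
    (∀ x ∈ L1, ∀ y : Word, y <+: x → y ∈ L1) →
    (∀ x ∈ L2, ∀ y : Word, y <+: x → y ∈ L2) →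
    ∃ P : Finset Word, IsCPC P ∧ ∀ t1 ∈ X, ∀ t2 ∈ X, ∃ t ∈ X,
      (∀ y ∈ L1, t y = t1 y) ∧
      ∀ w : Word, SetLeaf L1 w → ∀ x ∈ P, ∀ y ∈ L2, t (w ++ x ++ y) = t2 y

/-- The vertex tree-shift of the pair of 0-1 matrices `A0`, `A1`. -/
def vertexShift {A : Type} (A0 A1 : A → A → Bool) : Set (ITree A) :=
  { t | ∀ x : Word,
      A0 (t x) (t (x ++ [false])) = true ∧ A1 (t x) (t (x ++ [true])) = true }

/-- The n-blocks of `X`, realized as labelings of Σ_{n-1}; used for counting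
`|B_n(X)|`. -/
def blockFuns {A : Type} (X : Set (ITree A)) (n : ℕ) :
    Set ({ x : Word // x.length < n } → A) :=
  { f | ∃ t ∈ X, ∃ r : Word, ∀ y : { x : Word // x.length < n }, f y = t (r ++ y.val) }

/-- the vertex tree-shift `X_{A0,A1}` is nonempty iff `A0` and
`A1` simultaneously contain essential submatrices. -/
theorem stmt1 {A : Type} [Fintype A] (A0 A1 : A → A → Bool) :
    (vertexShift A0 A1).Nonempty ↔
      ∃ S : Set A, S.Nonempty ∧ ∀ a ∈ S,
        (∃ b ∈ S, A0 a b = true) ∧ (∃ c ∈ S, A1 a c = true) := by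
  constructor
  · rintro ⟨t, ht⟩
    refine ⟨Set.range t, ⟨t [], ⟨[], rfl⟩⟩, ?_⟩
    rintro a ⟨x, rfl⟩
    exact ⟨⟨t (x ++ [false]), ⟨_, rfl⟩, (ht x).1⟩, ⟨t (x ++ [true]), ⟨_, rfl⟩, (ht x).2⟩⟩
  · rintro ⟨S, ⟨a0, ha0⟩, hS⟩
    choose b hbS hb using fun a ha => (hS a ha).1
    choose c hcS hc using fun a ha => (hS a ha).2
    let step : Bool → {a // a ∈ S} → {a // a ∈ S} := fun i p =>
      if i then ⟨c p.1 p.2, hcS p.1 p.2⟩ else ⟨b p.1 p.2, hbS p.1 p.2⟩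
    let h : Word → {a // a ∈ S} := fun w => w.foldr step ⟨a0, ha0⟩
    refine ⟨fun x => (h x.reverse).1, fun x => ?_⟩
    have h0 : (x ++ [false]).reverse = false :: x.reverse := by simp
    have h1 : (x ++ [true]).reverse = true :: x.reverse := by simp
    show A0 (h x.reverse).1 (h (x ++ [false]).reverse).1 = true ∧
      A1 (h x.reverse).1 (h (x ++ [true]).reverse).1 = true
    rw [h0, h1]
    show A0 (h x.reverse).1 (step false (h x.reverse)).1 = true ∧
      A1 (h x.reverse).1 (step true (h x.reverse)).1 = true
    exact ⟨hb _ (h x.reverse).2, hc _ (h x.reverse).2⟩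
end

section
/- There is an aperiodic tree-shift of finite type: for A = {0,1}, A_0(a,b) = 1 iff b ≠ a, and A_1(a,b) = 1 iff b = a, the vertex tree-shift X_{A_0,A_1} is nonempty and contains no periodic tree, i.e., there is no t ∈ X_{A_0,A_1} and complete prefix code P with σ_x t = t for all x ∈ P. -/
/-- Parity of the number of `false`s in a word. -/
def par (w : Word) : Bool := Nat.bodd (w.count false)

lemma par_append_false (x : Word) : par (x ++ [false]) = !par x := by
  simp [par, List.count_append]

lemma par_append_true (x : Word) : par (x ++ [true]) = par x := by
  simp [par, List.count_append]

lemma par_mem : par ∈ vertexShift (fun a b : Bool => decide (b ≠ a))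
    (fun a b : Bool => decide (b = a)) := by
  intro x
  constructor
  · rw [par_append_false]; cases par x <;> simp
  · rw [par_append_true]; simp

lemma shift_form {t : ITree Bool}
    (ht : t ∈ vertexShift (fun a b : Bool => decide (b ≠ a))
      (fun a b : Bool => decide (b = a))) :
    ∀ w : Word, t w = xor (par w) (t []) := by
  intro w
  induction w using List.reverseRecOn with
  | nil => simp [par]
  | append_singleton w b ih =>
    obtain ⟨h0, h1⟩ := ht w
    cases b
    · have h0' : t (w ++ [false]) ≠ t w := by simpa using h0
      rw [par_append_false]
      cases hb : t (w ++ [false]) <;> cases hc : t w <;>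
        simp_all
    · have h1' : t (w ++ [true]) = t w := by simpa using h1
      rw [par_append_true, h1', ih]

/-- there is an aperiodic tree-shift of finite type: the vertex
tree-shift with A0(a,b) = 1 iff b ≠ a and A1(a,b) = 1 iff b = a is nonempty
and contains no periodic tree. -/
theorem stmt4 :
    (vertexShift (fun a b : Bool => decide (b ≠ a))
        (fun a b : Bool => decide (b = a))).Nonempty ∧
      ¬ ∃ t ∈ vertexShift (fun a b : Bool => decide (b ≠ a))
          (fun a b : Bool => decide (b = a)),
          ∃ P : Finset Word, IsCPC P ∧ ∀ x ∈ P, shiftW x t = t := by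
  constructor
  · exact ⟨par, par_mem⟩
  · rintro ⟨t, ht, P, ⟨hnil, _, hcov⟩, hper⟩
    -- every p ∈ P has even number of falses
    have hpar : ∀ p ∈ P, par p = false := by
      intro p hp
      have h1 : t p = t [] := by
        have := congrFun (hper p hp) []
        simpa [shiftW] using this
      have h2 := shift_form ht p
      rw [h1] at h2
      cases hte : t [] <;> rw [hte] at h2 <;> simpa using h2.symm
    -- consider the word false :: true^N
    set x : Word := false :: List.replicate (P.sup List.length) true with hx
    have hxlen : P.sup List.length ≤ x.length := by
      simp [hx]
    obtain ⟨p, hp, s, hs⟩ := hcov x hxlen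
    -- p is nonempty, so p = false :: q with q all-true
    have hpne : p ≠ [] := fun h => hnil (h ▸ hp)
    obtain ⟨a, q, rfl⟩ := List.exists_cons_of_ne_nil hpne
    have hax : a :: (q ++ s) = x := by simpa using hs
    rw [hx] at hax
    have ha : a = false := (List.cons.injEq _ _ _ _ ▸ hax).1
    have hq : q ++ s = List.replicate (P.sup List.length) true :=
      (List.cons.injEq _ _ _ _ ▸ hax).2
    have hqrep : ∀ b ∈ q, b = true := by
      intro b hb
      have : b ∈ List.replicate (P.sup List.length) true := by
        rw [← hq]; exact List.mem_append_left _ hb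
      exact List.eq_of_mem_replicate this
    have hcount : (q.count false) = 0 := by
      rw [List.count_eq_zero]
      intro hf
      exact Bool.false_ne_true (hqrep false hf)
    have := hpar (a :: q) hp
    rw [ha] at this
    simp [par, List.count_cons, hcount] at this
end

section
/- A vertex tree-shift X_{A_0,A_1} is strongly irreducible if and only if it is block gluing. -/
/-! ### Auxiliary lemmas for stmt6 -/

section Stmt6Aux

variable {A : Type}

/-- Shift invariance of a vertex tree-shift. -/
lemma vertexShift_shift {A0 A1 : A → A → Bool} {t : ITree A}
    (ht : t ∈ vertexShift A0 A1) (w : Word) : shiftW w t ∈ vertexShift A0 A1 := by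
  intro x
  have := ht (w ++ x)
  simpa [shiftW, List.append_assoc] using this

/-- An antichain for the prefix order. -/
def IsPAntichain (C : Set Word) : Prop := ∀ p ∈ C, ∀ q ∈ C, p <+: q → p = q

-- Graft the trees `S p`, `p ∈ C`, onto the tree `t`.
open Classical in
noncomputable def graft (C : Set Word) (t : ITree A) (S : Word → ITree A) : ITree A :=
  fun z => if h : ∃ p ∈ C, p <+: z then S h.choose (z.drop h.choose.length) else t z

lemma graft_of_not {C : Set Word} {t : ITree A} {S : Word → ITree A} {z : Word}
    (hz : ¬ ∃ p ∈ C, p <+: z) : graft C t S z = t z := by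
  rw [graft, dif_neg hz]

lemma graft_append {C : Set Word} (hC : IsPAntichain C) {t : ITree A} {S : Word → ITree A}
    {p : Word} (hp : p ∈ C) (y : Word) : graft C t S (p ++ y) = S p y := by
  have h : ∃ q ∈ C, q <+: p ++ y := ⟨p, hp, List.prefix_append _ _⟩
  have hq := h.choose_spec
  have heq : h.choose = p := by
    rcases List.prefix_or_prefix_of_prefix hq.2 (List.prefix_append p y) with h1 | h1
    · exact hC _ hq.1 _ hp h1
    · exact (hC _ hp _ hq.1 h1).symm
  rw [graft, dif_pos h, heq, List.drop_left]

/-- A prefix of `x ++ [i]` is a prefix of `x` or equals `x ++ [i]`. -/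
lemma prefix_snoc_cases {p x : Word} {i : Bool} (h : p <+: x ++ [i]) :
    p <+: x ∨ p = x ++ [i] := by
  rcases Nat.lt_or_ge p.length (x ++ [i]).length with hl | hl
  · left
    refine List.prefix_of_prefix_length_le h (List.prefix_append x [i]) ?_
    simpa [List.length_append] using Nat.lt_succ_iff.mp (by simpa [List.length_append] using hl)
  · right
    exact h.eq_of_length_le hl

lemma graft_mem {A0 A1 : A → A → Bool} {C : Set Word} (hC : IsPAntichain C)
    {t : ITree A} (ht : t ∈ vertexShift A0 A1) {S : Word → ITree A}
    (hS : ∀ p ∈ C, S p ∈ vertexShift A0 A1)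
    (hbd : ∀ p ∈ C, S p [] = t p) :
    graft C t S ∈ vertexShift A0 A1 := by
  intro x
  by_cases hx : ∃ p ∈ C, p <+: x
  · obtain ⟨p, hp, y, rfl⟩ := hx
    have h1 : graft C t S (p ++ y) = S p y := graft_append hC hp y
    have h2 : ∀ i : Bool, graft C t S (p ++ y ++ [i]) = S p (y ++ [i]) := by
      intro i
      rw [List.append_assoc]
      exact graft_append hC hp (y ++ [i])
    rw [h1, h2 false, h2 true]
    exact hS p hp y
  · have h1 : graft C t S x = t x := graft_of_not hx
    have h2 : ∀ i : Bool, graft C t S (x ++ [i]) = t (x ++ [i]) := by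
      intro i
      by_cases hxi : ∃ p ∈ C, p <+: x ++ [i]
      · obtain ⟨p, hp, hpx⟩ := hxi
        rcases prefix_snoc_cases hpx with h | h
        · exact absurd ⟨p, hp, h⟩ hx
        · subst h
          have h3 : graft C t S ((x ++ [i]) ++ []) = S (x ++ [i]) [] :=
            graft_append hC hp []
          rw [List.append_nil] at h3
          rw [h3, hbd _ hp]
      · exact graft_of_not hxi
    rw [h1, h2 false, h2 true]
    exact ht x

/-- Single-symbol gluing obtained from block gluing (case n = 1). -/
lemma one_block_glue {A0 A1 : A → A → Bool} {P : Finset Word}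
    (hglue : ∀ n : ℕ, ∀ u v : Pattern A, IsNBlock (vertexShift A0 A1) n u →
      IsNBlock (vertexShift A0 A1) n v → ConnectedThrough (vertexShift A0 A1) P u v)
    {a b : A} (ha : ∃ s ∈ vertexShift A0 A1, s [] = a)
    (hb : ∃ s ∈ vertexShift A0 A1, s [] = b) :
    ∃ t ∈ vertexShift A0 A1, t [] = a ∧ ∀ x ∈ P, t x = b := by
  obtain ⟨sa, hsa, rfl⟩ := ha
  obtain ⟨sb, hsb, rfl⟩ := hb
  have hlen : ∀ y : Word, y ∈ sigmaLt 1 → y = [] := by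
    intro y hy
    exact List.length_eq_zero_iff.mp (Nat.lt_one_iff.mp hy)
  have hblk : ∀ s : ITree A, s ∈ vertexShift A0 A1 →
      IsNBlock (vertexShift A0 A1) 1 ⟨sigmaLt 1, fun _ => s []⟩ := by
    intro s hs
    refine ⟨rfl, s, hs, [], ?_⟩
    intro y hy
    rw [hlen y hy]
    rfl
  obtain ⟨t, htX, hu, hleaf⟩ := hglue 1 _ _ (hblk sa hsa) (hblk sb hsb)
  refine ⟨t, htX, ?_, ?_⟩
  · have : ([] : Word) ∈ sigmaLt 1 := Nat.zero_lt_one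
    exact hu [] this
  · intro x hx
    have hl : Pattern.IsLeaf ⟨sigmaLt 1, fun _ => sa []⟩ [] := by
      constructor
      · exact Nat.zero_lt_one
      · intro i hi
        simp [sigmaLt] at hi
    have := hleaf [] hl x hx [] Nat.zero_lt_one
    simpa using this

/-- From block gluing: a tree with a prescribed root symbol having a copy of a
prescribed tree rooted at each word of the CPC. -/
lemma glue_tree {A0 A1 : A → A → Bool} {P : Finset Word} (hP : IsCPC P)
    (hglue : ∀ n : ℕ, ∀ u v : Pattern A, IsNBlock (vertexShift A0 A1) n u →
      IsNBlock (vertexShift A0 A1) n v → ConnectedThrough (vertexShift A0 A1) P u v)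
    {a : A} (ha : ∃ s ∈ vertexShift A0 A1, s [] = a)
    {tv : ITree A} (htv : tv ∈ vertexShift A0 A1) :
    ∃ s ∈ vertexShift A0 A1, s [] = a ∧ ∀ x ∈ P, ∀ y : Word, s (x ++ y) = tv y := by
  obtain ⟨t, htX, hta, htb⟩ := one_block_glue hglue ha ⟨tv, htv, rfl⟩
  have hanti : IsPAntichain (↑P : Set Word) := fun p hp q hq h => hP.2.1 p hp q hq h
  refine ⟨graft (↑P) t (fun _ => tv), graft_mem hanti htX (fun _ _ => htv) ?_, ?_, ?_⟩
  · intro p hp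
    exact (htb p hp).symm
  · refine (graft_of_not ?_).trans hta
    rintro ⟨p, hp, hpre⟩
    rw [List.prefix_nil.mp hpre] at hp
    exact hP.1 hp
  · intro x hx y
    exact graft_append hanti hx y

end Stmt6Aux
/-- a vertex tree-shift is strongly irreducible iff it is block
gluing. -/
theorem stmt6 {A : Type} [Fintype A] (A0 A1 : A → A → Bool) :
    StronglyIrreducible (vertexShift A0 A1) ↔ BlockGluing (vertexShift A0 A1) := by
  constructor
  · rintro ⟨P, hP, h⟩
    refine ⟨P, hP, ?_⟩
    intro n u v hu hv
    have good : ∀ w : Pattern A, IsNBlock (vertexShift A0 A1) n w →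
        GoodPattern (vertexShift A0 A1) w := by
      intro w hw
      refine ⟨?_, ?_, hw.2⟩
      · rw [hw.1]
        exact List.finite_length_lt Bool n
      · intro x hx y hy
        rw [hw.1] at hx ⊢
        exact lt_of_le_of_lt hy.length_le hx
    exact h u v (good u hu) (good v hv)
  · rintro ⟨P, hP, hglue⟩
    refine ⟨P, hP, ?_⟩
    rintro u v ⟨-, huPC, tu0, htu0, xu, hxu⟩ ⟨-, -, tv0, htv0, xv, hxv⟩
    set tu : ITree A := shiftW xu tu0 with htu_def
    have htuX : tu ∈ vertexShift A0 A1 := vertexShift_shift htu0 xu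
    have htu_eq : ∀ y ∈ u.supp, tu y = u.val y := fun y hy => (hxu y hy).symm
    set tv : ITree A := shiftW xv tv0 with htv_def
    have htvX : tv ∈ vertexShift A0 A1 := vertexShift_shift htv0 xv
    have htv_eq : ∀ y ∈ v.supp, tv y = v.val y := fun y hy => (hxv y hy).symm
    -- the set of leaves of u is an antichain
    have hanti : IsPAntichain {w | u.IsLeaf w} := by
      rintro p hp q hq ⟨r, rfl⟩
      cases r with
      | nil => rw [List.append_nil]
      | cons i r' =>
        exfalso
        refine hp.2 i (huPC _ hq.1 _ ⟨r', ?_⟩)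
        simp
    -- choose the glued trees at each leaf
    have hex : ∀ w : Word, u.IsLeaf w → ∃ s ∈ vertexShift A0 A1,
        s [] = tu w ∧ ∀ x ∈ P, ∀ y : Word, s (x ++ y) = tv y := by
      intro w hw
      refine glue_tree hP hglue ⟨shiftW w tu, vertexShift_shift htuX w, ?_⟩ htvX
      simp [shiftW]
    have : Nonempty A := ⟨tu []⟩
    choose! S hSX hS0 hSv using hex
    refine ⟨graft {w | u.IsLeaf w} tu S,
      graft_mem hanti htuX (fun p hp => hSX p hp) (fun p hp => hS0 p hp), ?_, ?_⟩
    · intro y hy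
      by_cases hpre : ∃ p ∈ {w | u.IsLeaf w}, p <+: y
      · obtain ⟨p, hp, r, rfl⟩ := hpre
        cases r with
        | nil =>
          rw [List.append_nil] at hy ⊢
          have h1 : graft {w | u.IsLeaf w} tu S (p ++ []) = S p [] :=
            graft_append hanti hp []
          rw [List.append_nil] at h1
          rw [h1, hS0 p hp]
          exact htu_eq p hy
        | cons i r' =>
          exfalso
          refine hp.2 i (huPC _ hy _ ⟨r', ?_⟩)
          simp
      · rw [graft_of_not hpre]
        exact htu_eq y hy
    · intro w hw x hx y hy
      rw [List.append_assoc, graft_append hanti hw (x ++ y), hSv w hw x hx y]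
      exact htv_eq y hy
end

section
/- Every nontrivial block gluing tree-shift of finite type has positive topological entropy: if X = X_{A_0,A_1} is a nonempty block gluing vertex tree-shift with |B_1(X)| ≥ 2, then liminf_{n→∞} ln(ln |B_n(X)|)/n > 0. -/
namespace Stmt8Aux

variable {A : Type} {A0 A1 : A → A → Bool}

lemma shift_mem {t : ITree A} (h : t ∈ vertexShift A0 A1) (w : Word) :
    shiftW w t ∈ vertexShift A0 A1 := by
  intro x
  have := h (w ++ x)
  simpa [shiftW, List.append_assoc] using this

def graft (t s : ITree A) (q : Word) : ITree A :=
  fun x => if q <+: x then s (x.drop q.length) else t x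

lemma graft_prefix (t s : ITree A) (q y : Word) : graft t s q (q ++ y) = s y := by
  simp [graft, List.prefix_append, List.drop_left]

lemma graft_not_prefix (t s : ITree A) {q x : Word} (h : ¬ q <+: x) :
    graft t s q x = t x := if_neg h

lemma graft_mem {t s : ITree A} {q : Word} (ht : t ∈ vertexShift A0 A1)
    (hs : s ∈ vertexShift A0 A1) (hroot : s [] = t q) :
    graft t s q ∈ vertexShift A0 A1 := by
  intro x
  by_cases hx : q <+: x
  · obtain ⟨y, rfl⟩ := hx
    have h2 : ∀ i : Bool, graft t s q ((q ++ y) ++ [i]) = s (y ++ [i]) := by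
      intro i; rw [List.append_assoc]; exact graft_prefix ..
    rw [graft_prefix, h2, h2]; exact hs y
  · have key : ∀ i : Bool, graft t s q (x ++ [i]) = t (x ++ [i]) := by
      intro i
      by_cases hq : q <+: x ++ [i]
      · have hlen : ¬ q.length ≤ x.length := fun hle =>
          hx (List.prefix_of_prefix_length_le hq (List.prefix_append x [i]) hle)
        have hq' : q = x ++ [i] := by
          refine hq.eq_of_length ?_
          have h1 : q.length ≤ x.length + 1 := by simpa using hq.length_le
          have h2 : x.length < q.length := not_le.mp hlen
          simp; omega
        show (if q <+: x ++ [i] then s ((x ++ [i]).drop q.length) else t (x ++ [i])) = t (x ++ [i])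
        rw [if_pos hq, hq', List.drop_length, ← hq', hroot, hq']
      · exact graft_not_prefix t s hq
    rw [graft_not_prefix t s hx, key, key]
    exact ht x

/-- A symbol appearing at the root of some tree of `X`. -/
def Appears (X : Set (ITree A)) (e : A) : Prop := ∃ t ∈ X, t [] = e

lemma appears_of_mem {t : ITree A} (h : t ∈ vertexShift A0 A1) (w : Word) :
    Appears (vertexShift A0 A1) (t w) :=
  ⟨shiftW w t, shift_mem h w, by simp [shiftW]⟩

lemma exists_mem_cpc {P : Finset Word} (hP : IsCPC P) : ∃ x0 ∈ P, x0 ≠ [] := by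
  obtain ⟨p, hp, -⟩ := hP.2.2 (List.replicate (P.sup List.length) false) (by simp)
  exact ⟨p, hp, fun h => hP.1 (h ▸ hp)⟩

lemma mem_sigmaLt_one {y : Word} (h : y ∈ sigmaLt 1) : y = [] := by
  have : y.length < 1 := h
  cases y with
  | nil => rfl
  | cons a l => simp at this

lemma glue {P : Finset Word}
    (hconn : ∀ n : ℕ, ∀ u v : Pattern A, IsNBlock (vertexShift A0 A1) n u →
      IsNBlock (vertexShift A0 A1) n v → ConnectedThrough (vertexShift A0 A1) P u v)
    {x0 : Word} (hx0 : x0 ∈ P) {e d : A}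
    (he : Appears (vertexShift A0 A1) e) (hd : Appears (vertexShift A0 A1) d) :
    ∃ t ∈ vertexShift A0 A1, t [] = e ∧ t x0 = d := by
  obtain ⟨te, hte, hte0⟩ := he
  obtain ⟨td, htd, htd0⟩ := hd
  have hblock : ∀ c : A, (∃ tc ∈ vertexShift A0 A1, tc [] = c) →
      IsNBlock (vertexShift A0 A1) 1 ⟨sigmaLt 1, fun _ => c⟩ := by
    rintro c ⟨tc, htc, htc0⟩
    refine ⟨rfl, tc, htc, [], ?_⟩
    intro y hy
    rw [mem_sigmaLt_one hy]
    simpa using htc0.symm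
  obtain ⟨t, htX, hu', hleaf⟩ := hconn 1 _ _ (hblock e ⟨te, hte, hte0⟩) (hblock d ⟨td, htd, htd0⟩)
  have hroot : ([] : Word) ∈ sigmaLt 1 := by
    show ([] : Word).length < 1; simp
  refine ⟨t, htX, hu' [] hroot, ?_⟩
  have hl : Pattern.IsLeaf ⟨sigmaLt 1, fun _ => e⟩ [] := by
    refine ⟨hroot, ?_⟩
    intro i hi
    have : ([] ++ [i] : Word).length < 1 := hi
    simp at this
  have := hleaf [] hl x0 hx0 [] hroot
  simpa using this

/-- Position words used to realize independent choices. -/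
def rho (x0 : Word) : List Bool → Word
  | [] => x0
  | i :: s => x0 ++ i :: rho x0 s

lemma rho_length (x0 : Word) (s : List Bool) :
    (rho x0 s).length = (s.length + 1) * x0.length + s.length := by
  induction s with
  | nil => simp [rho]
  | cons i s ih => simp [rho, ih]; ring

lemma not_prefix_diff (x0 z : Word) {i j : Bool} (hij : i ≠ j) :
    ¬ (x0 ++ [i]) <+: (x0 ++ j :: z) := by
  rw [List.prefix_append_right_inj]
  intro h
  exact hij (List.cons_prefix_cons.mp h).1

lemma not_prefix_nil (x0 : Word) (i : Bool) : ¬ (x0 ++ [i]) <+: [] := by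
  rw [List.prefix_nil]; simp

lemma realize {a b : A}
    (ha : Appears (vertexShift A0 A1) a) (hb : Appears (vertexShift A0 A1) b)
    {x0 : Word}
    (hglue : ∀ e d : A, Appears (vertexShift A0 A1) e → Appears (vertexShift A0 A1) d →
      ∃ t ∈ vertexShift A0 A1, t [] = e ∧ t x0 = d) :
    ∀ (k : ℕ) (e : A), Appears (vertexShift A0 A1) e → ∀ g : List Bool → Bool,
      ∃ T ∈ vertexShift A0 A1, T [] = e ∧
        ∀ s : List Bool, s.length = k → T (rho x0 s) = (if g s then a else b) := by
  intro k
  induction k with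
  | zero =>
    intro e he g
    obtain ⟨t, htX, h1, h2⟩ := hglue e (if g [] then a else b) he (by split <;> assumption)
    refine ⟨t, htX, h1, ?_⟩
    intro s hs
    rw [List.length_eq_zero_iff.mp hs]
    exact h2
  | succ k ih =>
    intro e he g
    obtain ⟨T0, hT0, hT0e⟩ := he
    obtain ⟨Tf, hTf, hTfr, hTfs⟩ := ih (T0 (x0 ++ [false])) (appears_of_mem hT0 _)
      (fun s => g (false :: s))
    obtain ⟨Tt, hTt, hTtr, hTts⟩ := ih (T0 (x0 ++ [true])) (appears_of_mem hT0 _)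
      (fun s => g (true :: s))
    set T1 := graft T0 Tf (x0 ++ [false]) with hT1def
    have hT1 : T1 ∈ vertexShift A0 A1 := graft_mem hT0 hTf hTfr
    have hT1t : T1 (x0 ++ [true]) = T0 (x0 ++ [true]) :=
      graft_not_prefix _ _ (by simpa using not_prefix_diff x0 [] (by simp))
    set T := graft T1 Tt (x0 ++ [true]) with hTdef
    have hT : T ∈ vertexShift A0 A1 := graft_mem hT1 hTt (by rw [hTtr, hT1t])
    refine ⟨T, hT, ?_, ?_⟩
    · rw [hTdef, graft_not_prefix _ _ (not_prefix_nil x0 true),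
        hT1def, graft_not_prefix _ _ (not_prefix_nil x0 false), hT0e]
    · intro s hs
      cases s with
      | nil => simp at hs
      | cons i s' =>
        have hs' : s'.length = k := by simpa using hs
        have hrho : rho x0 (i :: s') = (x0 ++ [i]) ++ rho x0 s' := by
          simp [rho]
        cases i
        · rw [hrho, hTdef,
            graft_not_prefix _ _ (by simpa using not_prefix_diff x0 (rho x0 s') (by simp)),
            hT1def, graft_prefix, hTfs s' hs']
        · rw [hrho, hTdef, graft_prefix, hTts s' hs']

lemma finite_words (n : ℕ) : Finite {x : Word // x.length < n} :=
  (List.finite_length_lt Bool n).to_subtype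

lemma exists_two [Fintype A] (h2 : 2 ≤ (blockFuns (vertexShift A0 A1) 1).ncard) :
    ∃ a b : A, a ≠ b ∧ Appears (vertexShift A0 A1) a ∧ Appears (vertexShift A0 A1) b := by
  haveI : Finite {x : Word // x.length < 1} := finite_words 1
  have hfin : (blockFuns (vertexShift A0 A1) 1).Finite := Set.toFinite _
  obtain ⟨f, g, hf, hg, hfg⟩ := (Set.one_lt_ncard_iff hfin).mp (by omega)
  set y0 : {x : Word // x.length < 1} := ⟨[], by simp⟩ with hy0
  have hall : ∀ y : {x : Word // x.length < 1}, y = y0 := by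
    intro y; apply Subtype.ext; exact mem_sigmaLt_one y.2
  have hne : f y0 ≠ g y0 := by
    intro h; apply hfg; funext y; rw [hall y]; exact h
  obtain ⟨t, htX, r, hr⟩ := hf
  obtain ⟨t', ht'X, r', hr'⟩ := hg
  refine ⟨f y0, g y0, hne, ?_, ?_⟩
  · rw [hr y0]; exact appears_of_mem htX _
  · rw [hr' y0]; exact appears_of_mem ht'X _

lemma card_lower [Fintype A] {a b : A} (hab : a ≠ b) {x0 : Word} {k n : ℕ}
    (hlen : ∀ s : List Bool, s.length = k → (rho x0 s).length < n)
    (hreal : ∀ g : List Bool → Bool, ∃ T ∈ vertexShift A0 A1,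
      ∀ s : List Bool, s.length = k → T (rho x0 s) = (if g s then a else b)) :
    2 ^ 2 ^ k ≤ (blockFuns (vertexShift A0 A1) n).ncard := by
  haveI : Finite {x : Word // x.length < n} := finite_words n
  classical
  choose T hTX hTval using hreal
  set gg : ((Fin k → Bool) → Bool) → List Bool → Bool :=
    fun h s => h (fun i => s.getD i false) with hgg
  set Φ : ((Fin k → Bool) → Bool) → ↥(blockFuns (vertexShift A0 A1) n) :=
    fun h => ⟨fun y => T (gg h) y.val, ⟨T (gg h), hTX _, ⟨[], fun y => by simp⟩⟩⟩ with hΦ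
  have hgf : ∀ (h0 : (Fin k → Bool) → Bool) (f : Fin k → Bool),
      gg h0 (List.ofFn f) = h0 f := by
    intro h0 f
    have hsl : (List.ofFn f).length = k := List.length_ofFn
    have hfe : (fun i : Fin k => (List.ofFn f).getD i false) = f := by
      funext i
      rw [List.getD_eq_getElem _ _ (by simp [i.isLt])]
      simp
    simp only [hgg, hfe]
  have hinj : Function.Injective Φ := by
    intro h h' hhh
    funext f
    by_contra hne
    have hsl : (List.ofFn f).length = k := List.length_ofFn
    have h1 := hTval (gg h) (List.ofFn f) hsl
    have h2 := hTval (gg h') (List.ofFn f) hsl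
    have heq : T (gg h) (rho x0 (List.ofFn f)) = T (gg h') (rho x0 (List.ofFn f)) := by
      have := congrArg Subtype.val hhh
      exact congrFun this ⟨rho x0 (List.ofFn f), hlen _ hsl⟩
    rw [h1, h2, hgf, hgf] at heq
    cases hc : h f <;> cases hc' : h' f <;>
      simp [hc, hc'] at heq hne <;> exact hab (by simp [heq]) <;> skip
  calc 2 ^ 2 ^ k = Nat.card ((Fin k → Bool) → Bool) := by simp
    _ ≤ Nat.card ↥(blockFuns (vertexShift A0 A1) n) :=
        Nat.card_le_card_of_injective Φ hinj
    _ = (blockFuns (vertexShift A0 A1) n).ncard := Nat.card_coe_set_eq _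

lemma card_upper [Fintype A] (hA : 1 ≤ Fintype.card A) (n : ℕ) :
    (blockFuns (vertexShift A0 A1) n).ncard ≤ Fintype.card A ^ 3 ^ n := by
  haveI : Finite {x : Word // x.length < n} := finite_words n
  have h1 : (blockFuns (vertexShift A0 A1) n).ncard ≤
      Nat.card ({x : Word // x.length < n} → A) := by
    rw [← Nat.card_coe_set_eq]
    exact Nat.card_le_card_of_injective _ Subtype.val_injective
  have h2 : Nat.card {x : Word // x.length < n} ≤ 3 ^ n := by
    have hinj : Function.Injective (fun (x : {x : Word // x.length < n}) =>
        (fun i : Fin n => x.val[i.val]?)) := by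
      intro x y hxy
      apply Subtype.ext
      apply List.ext_getElem?
      intro m
      by_cases hm : m < n
      · exact congrFun hxy ⟨m, hm⟩
      · rw [List.getElem?_eq_none (by have := x.2; omega),
          List.getElem?_eq_none (by have := y.2; omega)]
    have := Nat.card_le_card_of_injective _ hinj
    simpa using this
  calc (blockFuns (vertexShift A0 A1) n).ncard
      ≤ Nat.card ({x : Word // x.length < n} → A) := h1
    _ = Fintype.card A ^ Nat.card {x : Word // x.length < n} := by
        rw [Nat.card_fun, Nat.card_eq_fintype_card]
    _ ≤ Fintype.card A ^ 3 ^ n := Nat.pow_le_pow_right hA h2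

end Stmt8Aux

/-- every nontrivial block gluing vertex tree-shift has positive
topological entropy: liminf ln(ln |B_n(X)|)/n > 0. -/
theorem stmt8 {A : Type} [Fintype A] (A0 A1 : A → A → Bool)
    (hne : (vertexShift A0 A1).Nonempty)
    (hbg : BlockGluing (vertexShift A0 A1))
    (h2 : 2 ≤ (blockFuns (vertexShift A0 A1) 1).ncard) :
    0 < Filter.liminf
      (fun n : ℕ =>
        Real.log (Real.log ((blockFuns (vertexShift A0 A1) n).ncard : ℝ)) / (n : ℝ))
      Filter.atTop := by
  classical
  open Filter Stmt8Aux in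
  obtain ⟨P, hP, hconn⟩ := hbg
  obtain ⟨x0, hx0P, hx0ne⟩ := exists_mem_cpc hP
  obtain ⟨a, b, hab, ha, hb⟩ := exists_two h2
  have hglue : ∀ e d : A, Appears (vertexShift A0 A1) e → Appears (vertexShift A0 A1) d →
      ∃ t ∈ vertexShift A0 A1, t [] = e ∧ t x0 = d :=
    fun e d he hd => glue hconn hx0P he hd
  have hreal := realize ha hb hglue
  set L : ℕ := x0.length with hLdef
  have hL1 : 1 ≤ L := by
    cases hx : x0 with
    | nil => exact absurd hx hx0ne
    | cons c w => rw [hLdef, hx]; simp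
  -- lower cardinality bound
  have lower : ∀ k n : ℕ, (k + 1) * (L + 1) ≤ n →
      2 ^ 2 ^ k ≤ (blockFuns (vertexShift A0 A1) n).ncard := by
    intro k n hkn
    refine card_lower hab (x0 := x0) (k := k) (n := n) ?_ ?_
    · intro s hs
      rw [rho_length, hs, ← hLdef]
      nlinarith [hkn]
    · intro g
      obtain ⟨T, hT, -, hval⟩ := hreal k a ha g
      exact ⟨T, hT, hval⟩
  have hA2 : 2 ≤ Fintype.card A := Fintype.one_lt_card_iff.mpr ⟨a, b, hab⟩
  set u : ℕ → ℝ := fun n : ℕ =>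
    Real.log (Real.log ((blockFuns (vertexShift A0 A1) n).ncard : ℝ)) / (n : ℝ) with hu
  have hlg : (0:ℝ) < Real.log 2 := Real.log_pos (by norm_num)
  -- upper boundedness
  set llA : ℝ := Real.log (Real.log (Fintype.card A)) with hllA
  set C : ℝ := Real.log 3 + |llA| with hC
  have hbdd : ∀ᶠ n : ℕ in atTop, u n ≤ C := by
    filter_upwards [eventually_ge_atTop (L + 2)] with n hn
    have hn1 : (1:ℝ) ≤ (n:ℝ) := by exact_mod_cast (by omega : 1 ≤ n)
    have hnpos : (0:ℝ) < (n:ℝ) := by linarith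
    set N := (blockFuns (vertexShift A0 A1) n).ncard with hN
    have h2N : 2 ≤ N := by
      have := lower 0 n (by omega)
      simpa using this
    have h2NR : (2:ℝ) ≤ (N:ℝ) := by exact_mod_cast h2N
    have hNup : (N:ℝ) ≤ (Fintype.card A : ℝ) ^ (3 ^ n : ℕ) := by
      have := card_upper (A0 := A0) (A1 := A1) (by omega) n
      rw [← hN] at this
      exact_mod_cast this
    have hAR : (1:ℝ) < (Fintype.card A : ℝ) := by exact_mod_cast (by omega : 1 < Fintype.card A)
    have hlogApos : 0 < Real.log (Fintype.card A) := Real.log_pos hAR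
    have hlogNpos : 0 < Real.log (N:ℝ) := lt_of_lt_of_le hlg (Real.log_le_log (by norm_num) h2NR)
    have hlogNub : Real.log (N:ℝ) ≤ ((3:ℝ) ^ n) * Real.log (Fintype.card A) := by
      have := Real.log_le_log (by linarith) hNup
      rwa [Real.log_pow, Nat.cast_pow] at this
      -- (3^n : ℕ) cast
    have hstep : Real.log (Real.log (N:ℝ)) ≤
        Real.log (((3:ℝ) ^ n) * Real.log (Fintype.card A)) :=
      Real.log_le_log hlogNpos hlogNub
    have hsplit : Real.log (((3:ℝ) ^ n) * Real.log (Fintype.card A)) =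
        (n:ℝ) * Real.log 3 + llA := by
      rw [Real.log_mul (by positivity) (ne_of_gt hlogApos), Real.log_pow, hllA]
    have h1 : u n ≤ ((n:ℝ) * Real.log 3 + llA) / n := by
      rw [hu]
      exact div_le_div_of_nonneg_right (by rw [← hsplit]; exact hstep) hnpos.le
    have h3 : ((n:ℝ) * Real.log 3 + llA) / n = Real.log 3 + llA / n := by
      field_simp
    have h4 : llA / n ≤ |llA| := by
      calc llA / n ≤ |llA / n| := le_abs_self _
        _ = |llA| / n := by rw [abs_div, abs_of_pos hnpos]
        _ ≤ |llA| := div_le_self (abs_nonneg _) hn1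
    rw [hC]
    calc u n ≤ ((n:ℝ) * Real.log 3 + llA) / n := h1
      _ = Real.log 3 + llA / n := h3
      _ ≤ Real.log 3 + |llA| := by linarith
  -- lower eventual bound
  set lL : ℝ := (L:ℝ) + 1 with hlL
  have hlLpos : (0:ℝ) < lL := by rw [hlL]; positivity
  set c0 : ℝ := Real.log 2 / (2 * lL) with hc0
  have hc0pos : 0 < c0 := by rw [hc0]; positivity
  set D : ℝ := 2 * Real.log 2 - Real.log (Real.log 2) with hD
  have hevD : ∀ᶠ n : ℕ in atTop, D / (n:ℝ) ≤ c0 :=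
    Filter.Tendsto.eventually_le_const hc0pos (tendsto_const_div_atTop_nhds_zero_nat D)
  have hlow : ∀ᶠ n : ℕ in atTop, c0 ≤ u n := by
    filter_upwards [hevD, eventually_ge_atTop (2 * (L + 1))] with n hdn hn
    have hLpos : 0 < L + 1 := by omega
    have hnpos' : 0 < n := by omega
    have hnpos : (0:ℝ) < (n:ℝ) := by exact_mod_cast hnpos'
    set k : ℕ := n / (L + 1) - 1 with hk
    have hdiv2 : 2 ≤ n / (L + 1) := (Nat.le_div_iff_mul_le hLpos).mpr (by omega)
    have hk1 : k + 1 = n / (L + 1) := by omega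
    have hkn : (k + 1) * (L + 1) ≤ n := by rw [hk1]; exact Nat.div_mul_le_self n (L + 1)
    have hlowN := lower k n hkn
    -- real: n < (L+1)(k+2)
    have hkreal : (n:ℝ) ≤ ((k:ℝ) + 2) * lL := by
      have hmod := Nat.div_add_mod n (L + 1)
      have hmlt : n % (L + 1) < L + 1 := Nat.mod_lt n hLpos
      have hcast : ((L:ℝ) + 1) * (((n / (L+1) : ℕ)):ℝ) + ((n % (L+1) : ℕ):ℝ) = (n:ℝ) := by
        exact_mod_cast hmod
      have hcast2 : (((n / (L+1) : ℕ)):ℝ) = (k:ℝ) + 1 := by exact_mod_cast hk1.symm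
      have hcast3 : ((n % (L+1) : ℕ):ℝ) ≤ (L:ℝ) + 1 := by
        exact_mod_cast le_of_lt hmlt
      rw [hlL]
      nlinarith [hcast, hcast2, hcast3]
    set N := (blockFuns (vertexShift A0 A1) n).ncard with hN
    have hcard : ((2:ℝ)) ^ (2 ^ k : ℕ) ≤ (N:ℝ) := by exact_mod_cast hlowN
    have hlogN : ((2 ^ k : ℕ):ℝ) * Real.log 2 ≤ Real.log (N:ℝ) := by
      rw [← Real.log_pow]
      exact Real.log_le_log (by positivity) hcard
    have hpowpos : (0:ℝ) < ((2 ^ k : ℕ):ℝ) * Real.log 2 := by positivity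
    have hloglogN : Real.log (((2 ^ k : ℕ):ℝ) * Real.log 2) ≤ Real.log (Real.log (N:ℝ)) :=
      Real.log_le_log hpowpos hlogN
    have hsplit : Real.log (((2 ^ k : ℕ):ℝ) * Real.log 2) =
        (k:ℝ) * Real.log 2 + Real.log (Real.log 2) := by
      rw [Real.log_mul (by positivity) (ne_of_gt hlg)]
      have : ((2 ^ k : ℕ):ℝ) = (2:ℝ) ^ k := by push_cast; ring
      rw [this, Real.log_pow]
    have step1 : ((k:ℝ) * Real.log 2 + Real.log (Real.log 2)) / n ≤ u n := by
      rw [hu]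
      exact div_le_div_of_nonneg_right (by rw [← hsplit]; exact hloglogN) hnpos.le
    have step2 : c0 ≤ ((k:ℝ) * Real.log 2 + Real.log (Real.log 2)) / n := by
      rw [hc0] at hdn ⊢
      rw [div_le_div_iff₀ (by positivity) hnpos]
      have hdn' : D * (2 * lL) ≤ Real.log 2 * (n:ℝ) := by
        have h := mul_le_mul_of_nonneg_right hdn
          (le_of_lt (mul_pos hnpos (by positivity : (0:ℝ) < 2 * lL)))
        have e1 : D / (n:ℝ) * ((n:ℝ) * (2 * lL)) = D * (2 * lL) := by
          field_simp
        have e2 : Real.log 2 / (2 * lL) * ((n:ℝ) * (2 * lL)) = Real.log 2 * (n:ℝ) := by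
          have h2lL : (2 * lL) ≠ 0 := by positivity
          field_simp
        rw [e1, e2] at h
        exact h
      have hnk : (n:ℝ) * Real.log 2 ≤ ((k:ℝ) + 2) * lL * Real.log 2 :=
        mul_le_mul_of_nonneg_right hkreal (le_of_lt hlg)
      rw [hD] at hdn'
      nlinarith [hnk, hdn']
    exact le_trans step2 step1
  have hcob : Filter.IsCoboundedUnder (· ≥ ·) Filter.atTop u :=
    (Filter.isBoundedUnder_of_eventually_le hbdd).isCoboundedUnder_ge
  have := Filter.le_liminf_of_le hcob hlow
  exact lt_of_lt_of_le hc0pos this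
end

section
/- Let A = {0,1} and let F be the set of 2-blocks u with u(ε) = u(0) = u(1), i.e., F = {(0,0,0), (1,1,1)}. Then the tree-shift of finite type X_F is strongly irreducible; in fact any two patterns accepted by X_F are connected through the complete prefix code P = {0, 10, 11}. -/
/-- The forbidden set F = {(0,0,0), (1,1,1)}: 2-blocks u (support Σ_1) with
u(ε) = u(0) = u(1). -/
def F910 : Set (Pattern Bool) :=
  { u | u.supp = { x : Word | x.length ≤ 1 } ∧
        u.val [false] = u.val [] ∧ u.val [true] = u.val [] }


section Aux

/-- Membership characterization of the tree-shift `X_{F910}`. -/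
lemma memX_iff (t : ITree Bool) :
    t ∈ treeShiftOf F910 ↔
      ∀ x : Word, ¬ (t (x ++ [false]) = t x ∧ t (x ++ [true]) = t x) := by
  constructor
  · intro ht x ⟨h0, h1⟩
    refine ht ⟨{ y : Word | y.length ≤ 1 }, fun y => t (x ++ y)⟩ ?_ ?_
    · exact ⟨rfl, by simpa using h0, by simpa using h1⟩
    · exact ⟨x, fun y _ => rfl⟩
  · rintro h u ⟨hs, h0, h1⟩ ⟨x, hx⟩
    have m0 : ([false] : Word) ∈ u.supp := by rw [hs]; simp
    have m1 : ([true] : Word) ∈ u.supp := by rw [hs]; simp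
    have me : ([] : Word) ∈ u.supp := by rw [hs]; simp
    have he : u.val [] = t x := by simpa using hx _ me
    refine h x ⟨?_, ?_⟩
    · rw [← hx _ m0, h0, he]
    · rw [← hx _ m1, h1, he]

lemma shift_mem {t : ITree Bool} (ht : t ∈ treeShiftOf F910) (w : Word) :
    shiftW w t ∈ treeShiftOf F910 := by
  rw [memX_iff] at ht ⊢
  intro x
  simpa [shiftW, List.append_assoc] using ht (w ++ x)

/-- The grafted value, as a function of the remainder word below a leaf. -/
def gfun (s : ITree Bool) : Word → Bool
  | [] => false
  | false :: zz => s zz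
  | [true] => !(s [])
  | true :: _ :: zz => s zz

/-- `y` lies strictly below some leaf of `u`. -/
def Below (u : Pattern Bool) (y : Word) : Prop :=
  ∃ w, u.IsLeaf w ∧ ∃ r : Word, r ≠ [] ∧ y = w ++ r

/-- The mixed tree: `base` on and around the support, grafted `s`-values
strictly below leaves. -/
noncomputable def mix (u : Pattern Bool) (s base : ITree Bool) : ITree Bool :=
  fun y => @dite _ (Below u y) (Classical.propDecidable _)
    (fun h => gfun s (y.drop h.choose.length)) (fun _ => base y)

lemma prefix_total {l1 l2 l3 : Word} (h1 : l1 <+: l3) (h2 : l2 <+: l3) :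
    l1 <+: l2 ∨ l2 <+: l1 := by
  obtain ⟨a, rfl⟩ := h1
  obtain ⟨b, hb⟩ := h2
  rcases List.append_eq_append_iff.mp hb with ⟨c, hc, -⟩ | ⟨c, hc, -⟩
  · exact Or.inr ⟨c, hc.symm⟩
  · exact Or.inl ⟨c, hc.symm⟩

lemma not_strict_prefix_of_leaf {u : Pattern Bool} (hc : u.PrefixClosed) {w y : Word}
    (hw : u.IsLeaf w) (hy : y ∈ u.supp) (h : w <+: y) : y = w := by
  by_contra hne
  obtain ⟨r, hr⟩ := h
  have hrne : r ≠ [] := by rintro rfl; simp at hr; exact hne hr.symm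
  obtain ⟨b, r', rfl⟩ := List.exists_cons_of_ne_nil hrne
  exact hw.2 b (hc y hy (w ++ [b]) ⟨r', by rw [← hr]; simp⟩)

lemma leaf_eq {u : Pattern Bool} (hc : u.PrefixClosed) {w w' y : Word}
    (hw : u.IsLeaf w) (hw' : u.IsLeaf w') (h1 : w <+: y) (h2 : w' <+: y) : w = w' := by
  rcases prefix_total h1 h2 with h | h
  · exact (not_strict_prefix_of_leaf hc hw hw'.1 h).symm
  · exact not_strict_prefix_of_leaf hc hw' hw.1 h

lemma mix_spec_in {u : Pattern Bool} (hc : u.PrefixClosed) {s base : ITree Bool}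
    {w : Word} (hw : u.IsLeaf w) {r : Word} (hr : r ≠ []) :
    mix u s base (w ++ r) = gfun s r := by
  have hB : Below u (w ++ r) := ⟨w, hw, r, hr, rfl⟩
  rw [mix, dif_pos hB]
  obtain ⟨hw', r', hr', he⟩ := hB.choose_spec
  have hchoose : hB.choose = w := leaf_eq hc hw' hw ⟨r', he.symm⟩ ⟨r, rfl⟩
  rw [hchoose, List.drop_left]

lemma mix_spec_out {u : Pattern Bool} {s base : ITree Bool} {y : Word}
    (h : ¬ Below u y) : mix u s base y = base y := by
  rw [mix, dif_neg h]

lemma supp_not_below {u : Pattern Bool} (hc : u.PrefixClosed) {y : Word}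
    (hy : y ∈ u.supp) : ¬ Below u y := by
  rintro ⟨w, hw, r, hr, rfl⟩
  obtain ⟨b, r', rfl⟩ := List.exists_cons_of_ne_nil hr
  exact hw.2 b (hc _ hy _ ⟨r', by simp⟩)

lemma child_not_below {u : Pattern Bool} {y : Word}
    (hy : ¬ Below u y) (hl : ¬ u.IsLeaf y) (b : Bool) : ¬ Below u (y ++ [b]) := by
  rintro ⟨w, hw, r, hr, he⟩
  have hlen : w.length ≤ y.length := by
    have h' := congrArg List.length he
    simp only [List.length_append, List.length_cons, List.length_nil] at h'
    have : 1 ≤ r.length := List.length_pos_iff.mpr hr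
    omega
  have hwp : w <+: y := by
    rcases prefix_total (⟨r, he.symm⟩ : w <+: y ++ [b]) (⟨[b], rfl⟩ : y <+: y ++ [b]) with h | h
    · exact h
    · exact (h.eq_of_length (le_antisymm h.length_le hlen)).symm ▸ List.prefix_refl _
  rcases eq_or_ne w y with rfl | hne
  · exact hl hw
  · obtain ⟨d, hd⟩ := hwp
    have hdne : d ≠ [] := by rintro rfl; simp at hd; exact hne hd
    exact hy ⟨w, hw, d, hdne, hd.symm⟩

lemma mix_mem {u : Pattern Bool} (hc : u.PrefixClosed) {s base : ITree Bool}
    (hs : s ∈ treeShiftOf F910) (hb : base ∈ treeShiftOf F910) :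
    mix u s base ∈ treeShiftOf F910 := by
  rw [memX_iff] at hs hb ⊢
  intro y
  by_cases hy : Below u y
  · obtain ⟨w, hw, r, hr, rfl⟩ := hy
    have e0 : mix u s base (w ++ r ++ [false]) = gfun s (r ++ [false]) := by
      rw [List.append_assoc]; exact mix_spec_in hc hw (by simp)
    have e1 : mix u s base (w ++ r ++ [true]) = gfun s (r ++ [true]) := by
      rw [List.append_assoc]; exact mix_spec_in hc hw (by simp)
    have e : mix u s base (w ++ r) = gfun s r := mix_spec_in hc hw hr
    rw [e0, e1, e]
    match r, hr with
    | false :: zz, _ => simpa [gfun] using hs zz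
    | [true], _ => simp [gfun]
    | true :: b :: zz, _ => simpa [gfun] using hs zz
  · by_cases hl : u.IsLeaf y
    · have e0 : mix u s base (y ++ [false]) = gfun s [false] :=
        mix_spec_in hc hl (by simp)
      have e1 : mix u s base (y ++ [true]) = gfun s [true] :=
        mix_spec_in hc hl (by simp)
      rw [e0, e1]
      simp [gfun]
    · rw [mix_spec_out (child_not_below hy hl false),
        mix_spec_out (child_not_below hy hl true), mix_spec_out hy]
      exact hb y

lemma cpc910 : IsCPC ({[false], [true, false], [true, true]} : Finset Word) := by
  refine ⟨by decide, by decide, ?_⟩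
  intro x hx
  have hsup : ({[false], [true, false], [true, true]} : Finset Word).sup List.length = 2 := by
    decide
  rw [hsup] at hx
  match x, hx with
  | [], h => simp at h
  | [a], h => simp at h
  | false :: b :: rest, _ => exact ⟨[false], by decide, ⟨b :: rest, rfl⟩⟩
  | true :: b :: rest, _ => exact ⟨[true, b], by cases b <;> decide, ⟨rest, rfl⟩⟩

lemma connect910 (u v : Pattern Bool)
    (hu : GoodPattern (treeShiftOf F910) u) (hv : GoodPattern (treeShiftOf F910) v) :
    ConnectedThrough (treeShiftOf F910)
      ({[false], [true, false], [true, true]} : Finset Word) u v := by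
  obtain ⟨-, hcu, t1, ht1, x, hx⟩ := hu
  obtain ⟨-, -, t2, ht2, z, hz⟩ := hv
  refine ⟨mix u (shiftW z t2) (shiftW x t1),
    mix_mem hcu (shift_mem ht2 z) (shift_mem ht1 x), ?_, ?_⟩
  · intro y hy
    rw [mix_spec_out (supp_not_below hcu hy)]
    exact (hx y hy).symm
  · intro w hw p hp y hy
    simp only [Finset.mem_insert, Finset.mem_singleton] at hp
    have hval : shiftW z t2 y = v.val y := (hz y hy).symm
    rcases hp with rfl | rfl | rfl
    · rw [List.append_assoc, mix_spec_in hcu hw (by simp)]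
      exact hval
    · rw [List.append_assoc, mix_spec_in hcu hw (by simp)]
      exact hval
    · rw [List.append_assoc, mix_spec_in hcu hw (by simp)]
      exact hval

end Aux

/-- X_F for F = {(0,0,0),(1,1,1)} is strongly irreducible; in
fact any two accepted patterns are connected through the CPC {0, 10, 11}. -/
theorem stmt9 :
    StronglyIrreducible (treeShiftOf F910) ∧
    IsCPC ({[false], [true, false], [true, true]} : Finset Word) ∧
    ∀ u v : Pattern Bool,
      GoodPattern (treeShiftOf F910) u → GoodPattern (treeShiftOf F910) v →
      ConnectedThrough (treeShiftOf F910)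
        ({[false], [true, false], [true, true]} : Finset Word) u v := by
  exact ⟨⟨_, cpc910, connect910⟩, cpc910, connect910⟩
end

section
/- Let A = {0,1} and F = {(0,0,0), (1,1,1)} (the 2-blocks u with u(ε) = u(0) = u(1)). Then the tree-shift of finite type X_F is not uniformly block gluing: for every k ∈ ℕ there exist n and n-blocks of X_F (for instance the 2-block u = (0,1,0) paired with itself) that are not connected through the complete prefix code Σ^k. -/
lemma mem_fullCode {k : ℕ} {x : Word} : x ∈ fullCode k ↔ x.length = k := by
  constructor
  · rintro hx
    simp only [fullCode, Finset.mem_image] at hx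
    obtain ⟨f, -, rfl⟩ := hx
    simp
  · intro h
    subst h
    simp only [fullCode, Finset.mem_image]
    exact ⟨x.get, Finset.mem_univ _, List.ofFn_get x⟩

/-- The 2-block (0,1,0). -/
def u910 : Pattern Bool := ⟨sigmaLt 2, fun x => decide (x = [false])⟩

/-- The alternating tree: value is `true` iff the last letter is `false`. -/
def t910 : ITree Bool := fun x => decide (x.getLast? = some false)

lemma t910_mem : t910 ∈ treeShiftOf F910 := by
  rintro p ⟨hsupp, h0, h1⟩ ⟨x, hx⟩
  have hf : p.val [false] = t910 (x ++ [false]) := hx [false] (by simp [hsupp])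
  have ht : p.val [true] = t910 (x ++ [true]) := hx [true] (by simp [hsupp])
  rw [h0] at hf; rw [h1] at ht
  simp [t910, List.getLast?_concat] at hf ht
  rw [hf] at ht
  exact absurd ht (by simp)

lemma u910_block : IsNBlock (treeShiftOf F910) 2 u910 := by
  refine ⟨rfl, t910, t910_mem, [], ?_⟩
  rintro y hy
  have hy' : y.length < 2 := hy
  match y with
  | [] => simp [u910, t910]
  | [b] => cases b <;> simp [u910, t910, List.getLast?_concat]
  | (a :: b :: l) => simp at hy'

lemma not_conn (k : ℕ) :
    ¬ ConnectedThrough (treeShiftOf F910) (fullCode k) u910 u910 := by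
  rintro ⟨t, htX, hagree, hleaf⟩
  -- no node equals both of its children
  have hstep : ∀ x : Word, t (x ++ [false]) = t x → t (x ++ [true]) = t x → False := by
    intro x h0 h1
    refine htX ⟨{ y : Word | y.length ≤ 1 }, fun y => t (x ++ y)⟩
      ⟨rfl, by simpa using h0, by simpa using h1⟩ ⟨x, fun y _ => rfl⟩
  have hleaf' : ∀ b : Bool, u910.IsLeaf [b] := by
    intro b
    refine ⟨by simp [u910, sigmaLt], fun i => ?_⟩
    simp [u910, sigmaLt]
  -- all nodes at depth k+1 carry value false
  have hbase : ∀ w : Word, w.length = k + 1 → t w = false := by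
    intro w hw
    match w with
    | [] => simp at hw
    | (b :: x) =>
      have hx : x.length = k := by simpa using hw
      have := hleaf [b] (hleaf' b) x (mem_fullCode.mpr hx) [] (by simp [u910, sigmaLt])
      simpa [u910] using this
  -- each level up to depth 1 is constant
  have hconst : ∀ j : ℕ, j ≤ k → ∃ c : Bool, ∀ w : Word, w.length = k + 1 - j → t w = c := by
    intro j
    induction j with
    | zero => intro _; exact ⟨false, fun w hw => hbase w (by omega)⟩
    | succ j ih =>
      intro hj
      obtain ⟨c, hc⟩ := ih (by omega)
      refine ⟨!c, fun w hw => ?_⟩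
      have h0 : t (w ++ [false]) = c := hc _ (by simp [hw]; omega)
      have h1 : t (w ++ [true]) = c := hc _ (by simp [hw]; omega)
      by_cases hwc : t w = c
      · exact (hstep w (by rw [h0, hwc]) (by rw [h1, hwc])).elim
      · cases c <;> simp_all
  obtain ⟨c, hc⟩ := hconst k le_rfl
  have hf : t [false] = c := hc [false] (by simp; try omega)
  have ht : t [true] = c := hc [true] (by simp; try omega)
  have hf' : t [false] = true := by
    have := hagree [false] (by simp [u910, sigmaLt]); simpa [u910] using this
  have ht' : t [true] = false := by
    have := hagree [true] (by simp [u910, sigmaLt]); simpa [u910] using this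
  rw [hf'] at hf; rw [ht'] at ht; rw [← hf] at ht; exact absurd ht (by simp)

/-- X_F for F = {(0,0,0),(1,1,1)} is not uniformly block gluing:
for every k there are n-blocks not connected through Σ^k. -/
theorem stmt10 :
    ¬ UniformlyBlockGluing (treeShiftOf F910) ∧
    ∀ k : ℕ, ∃ n : ℕ, ∃ u v : Pattern Bool,
      IsNBlock (treeShiftOf F910) n u ∧ IsNBlock (treeShiftOf F910) n v ∧
      ¬ ConnectedThrough (treeShiftOf F910) (fullCode k) u v := by
  constructor
  · rintro ⟨k, -, h⟩
    exact not_conn k (h 2 u910 u910 u910_block u910_block)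
  · intro k
    exact ⟨2, u910, u910, u910_block, u910_block, not_conn k⟩
end

section
/- Let A = {0,1} and let X = {t : Σ* → A | t(x) = t(y) whenever |x| = |y|} be the set of level-constant trees. Then X is not strongly irreducible: for every complete prefix code P there exist two patterns accepted by X that are not connected through P. -/
/-- The set of level-constant trees over {0,1}. -/
def levelConst : Set (ITree Bool) :=
  { t | ∀ x y : Word, x.length = y.length → t x = t y }

lemma prefix_nil' {y : Word} (h : y <+: ([] : Word)) : y = [] :=
  List.prefix_nil.mp h

lemma prefix_one' {a : Bool} {y : Word} (h : y <+: [a]) : y = [] ∨ y = [a] := by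
  rcases h with ⟨s, hs⟩
  rcases y with _ | ⟨c, ys⟩
  · left; rfl
  · right
    simp only [List.cons_append, List.cons.injEq] at hs
    obtain ⟨rfl, hs⟩ := hs
    have : ys = [] := by
      have := congrArg List.length hs
      simp at this
      exact this.1
    simp [this]

lemma prefix_two' {a b : Bool} {y : Word} (h : y <+: [a, b]) :
    y = [] ∨ y = [a] ∨ y = [a, b] := by
  rcases h with ⟨s, hs⟩
  rcases y with _ | ⟨c, _ | ⟨d, ys⟩⟩
  · left; rfl
  · right; left
    simp only [List.cons_append, List.nil_append, List.cons.injEq] at hs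
    simp [hs.1]
  · right; right
    simp only [List.cons_append, List.cons.injEq] at hs
    obtain ⟨rfl, rfl, hs⟩ := hs
    have : ys = [] := by
      have := congrArg List.length hs
      simp at this
      exact this.1
    simp [this]

/-- Pattern u: all-true on {[], [0], [1], [00], [01]}. -/
def pu : Pattern Bool :=
  ⟨{[], [false], [true], [false, false], [false, true]}, fun _ => true⟩

/-- Pattern v: true at root, false at both children. -/
def pv : Pattern Bool :=
  ⟨{[], [false], [true]}, fun y => y.isEmpty⟩

/-- the level-constant tree-shift is not strongly irreducible:
for every CPC P there are two accepted patterns not connected through P. -/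
theorem stmt12 :
    ∀ P : Finset Word, IsCPC P →
      ∃ u v : Pattern Bool, GoodPattern levelConst u ∧ GoodPattern levelConst v ∧
        ¬ ConnectedThrough levelConst P u v := by
  intro P hP
  refine ⟨pu, pv, ?_, ?_, ?_⟩
  · refine ⟨?_, ?_, ?_⟩
    · exact (((((Set.finite_singleton _).insert _).insert _).insert _).insert _)
    · intro x hx y hy
      simp only [pu, Set.mem_insert_iff, Set.mem_singleton_iff] at hx ⊢
      rcases hx with rfl | rfl | rfl | rfl | rfl
      · have := prefix_nil' hy; tauto
      · have := prefix_one' hy; tauto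
      · have := prefix_one' hy; tauto
      · have := prefix_two' hy; tauto
      · have := prefix_two' hy; tauto
    · exact ⟨fun _ => true, fun x y _ => rfl, [], fun y _ => rfl⟩
  · refine ⟨?_, ?_, ?_⟩
    · exact (((Set.finite_singleton _).insert _).insert _)
    · intro x hx y hy
      simp only [pv, Set.mem_insert_iff, Set.mem_singleton_iff] at hx ⊢
      rcases hx with rfl | rfl | rfl
      · have := prefix_nil' hy; tauto
      · have := prefix_one' hy; tauto
      · have := prefix_one' hy; tauto
    · refine ⟨fun x => x.isEmpty, ?_, [], ?_⟩
      · intro x y h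
        cases x <;> cases y <;> simp_all
      · intro y hy
        simp only [pv, Set.mem_insert_iff, Set.mem_singleton_iff] at hy
        rcases hy with rfl | rfl | rfl <;> rfl
  · rintro ⟨t, ht, hu, hleaf⟩
    -- P is nonempty
    obtain ⟨p, hp, -⟩ :=
      hP.2.2 (List.replicate (P.sup List.length) false) (by simp)
    have leaf1 : pu.IsLeaf [true] := by
      constructor
      · simp [pu]
      · intro i; cases i <;> simp [pu]
    have leaf2 : pu.IsLeaf [false, false] := by
      constructor
      · simp [pu]
      · intro i; cases i <;> simp [pu]
    have h1 := hleaf [true] leaf1 p hp [false] (by simp [pv])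
    have h2 := hleaf [false, false] leaf2 p hp [] (by simp [pv])
    have hlen : ([true] ++ p ++ [false]).length = ([false, false] ++ p ++ []).length := by
      simp
    have := ht _ _ hlen
    rw [h1, h2] at this
    simp [pv] at this
end

section
/- The even tree-shift Y is uniformly strongly irreducible with complete prefix code Σ^4: any two patterns accepted by Y are connected through Σ^4. -/
/-- Number of nodes labeled 1 along the path starting at `s` and descending
along the word `m` (both endpoints included). -/
def pathOnes (t : ITree Bool) (s m : Word) : ℕ :=
  ((Finset.range (m.length + 1)).filter fun j => t (s ++ m.take j) = true).card

/-- The even tree-shift: (1) along any path the number of 1's between two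
consecutive 0's is even; (2) any two paths starting at a common node and
ending at nodes labeled 0 carry the same number of 1's modulo 2. -/
def evenShift : Set (ITree Bool) :=
  { t |
    (∀ s m : Word, m ≠ [] → t s = false → t (s ++ m) = false →
      (∀ j : ℕ, 0 < j → j < m.length → t (s ++ m.take j) = true) →
      Even (m.length - 1)) ∧
    (∀ s m1 m2 : Word, t (s ++ m1) = false → t (s ++ m2) = false →
      pathOnes t s m1 % 2 = pathOnes t s m2 % 2) }


namespace Even16
def castB (b : Bool) : ZMod 2 := if b = true then 1 else 0

def Opar (t : ITree Bool) (w : Word) : ZMod 2 := (pathOnes t [] w : ZMod 2)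
lemma zmod_aux0 : ∀ E : ZMod 2, castB (decide (E = 1)) = E := by decide
lemma zmod_aux0' : ∀ a : ZMod 2, castB (decide (a = 0)) = 1 + a := by decide
lemma zmod_aux1 : ∀ a c : ZMod 2, c + a = 0 → a + (c + a) = c := by decide
lemma zmod_aux2 : ∀ a c b : ZMod 2, b = 1 → a + ((c + a) + 1 + b) = c := by decide
lemma zmod_ne_one : ∀ a : ZMod 2, ¬ a = 1 → a = 0 := by decide
lemma zmod_aux3 : ∀ a c b d : ZMod 2, d = b → a + ((c + a) + b + d) = c := by decide

lemma pathOnes_congr {t t' : ITree Bool} {s s' m : Word}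
    (h : ∀ j, j ≤ m.length → t (s ++ m.take j) = t' (s' ++ m.take j)) :
    pathOnes t s m = pathOnes t' s' m := by
  unfold pathOnes
  congr 1
  apply Finset.filter_congr
  intro j hj
  simp only [Finset.mem_range] at hj
  rw [h j (by omega)]

lemma pathOnes_nil (t : ITree Bool) (s : Word) :
    pathOnes t s [] = if t s = true then 1 else 0 := by
  unfold pathOnes
  simp only [Finset.range_one, Finset.filter_singleton, List.take_nil, List.append_nil]
  by_cases h : t s = true <;> simp [h]

lemma pathOnes_snoc (t : ITree Bool) (s m : Word) (a : Bool) :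
    pathOnes t s (m ++ [a]) = pathOnes t s m + (if t (s ++ (m ++ [a])) = true then 1 else 0) := by
  unfold pathOnes
  have hlen : (m ++ [a]).length = m.length + 1 := by simp
  rw [hlen, Finset.range_add_one, Finset.filter_insert]
  have hfull : (m ++ [a]).take (m.length + 1) = m ++ [a] := by
    rw [← hlen, List.take_length]
  have hsame : Finset.filter (fun j => t (s ++ (m ++ [a]).take j) = true) (Finset.range (m.length + 1))
      = Finset.filter (fun j => t (s ++ m.take j) = true) (Finset.range (m.length + 1)) := by
    apply Finset.filter_congr
    intro j hj
    simp only [Finset.mem_range] at hj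
    rw [List.take_append, Nat.sub_eq_zero_of_le (by omega : j ≤ m.length)]
    simp
  rw [hfull]
  by_cases hP : t (s ++ (m ++ [a])) = true
  · rw [if_pos hP, if_pos hP, Finset.card_insert_of_notMem (by simp), hsame]
  · rw [if_neg hP, if_neg hP, hsame]
    omega

lemma pathOnes_split (t : ITree Bool) (s m : Word) :
    pathOnes t [] (s ++ m) + (if t s = true then 1 else 0) = pathOnes t [] s + pathOnes t s m := by
  induction m using List.reverseRecOn with
  | nil => rw [List.append_nil, pathOnes_nil]
  | append_singleton m a ih =>
    rw [← List.append_assoc, pathOnes_snoc t [] (s ++ m) a, pathOnes_snoc t s m a]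
    simp only [List.nil_append, List.append_assoc]
    linarith [ih]

lemma Opar_snoc (t : ITree Bool) (m : Word) (a : Bool) :
    Opar t (m ++ [a]) = Opar t m + castB (t (m ++ [a])) := by
  unfold Opar castB
  have h := pathOnes_snoc t [] m a
  simp only [List.nil_append] at h
  rw [h]
  by_cases hb : t (m ++ [a]) = true <;> simp [hb]

lemma Opar_eq_of_mem {t : ITree Bool} (ht : t ∈ evenShift) {y1 y2 : Word}
    (h1 : t y1 = false) (h2 : t y2 = false) : Opar t y1 = Opar t y2 := by
  have := ht.2 [] y1 y2 (by simpa using h1) (by simpa using h2)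
  exact (ZMod.natCast_eq_natCast_iff _ _ _).mpr this

lemma mem_of_parity {t : ITree Bool} {c : ZMod 2}
    (h : ∀ w, t w = false → Opar t w = c) : t ∈ evenShift := by
  have key : ∀ s m : Word, t (s ++ m) = false →
      ((pathOnes t s m : ZMod 2)) = (c + (if t s = true then 1 else 0)) - Opar t s := by
    intro s m hsm
    have hsplit := pathOnes_split t s m
    have hcast : (Opar t (s ++ m)) + (if t s = true then (1 : ZMod 2) else 0)
        = Opar t s + (pathOnes t s m : ZMod 2) := by
      unfold Opar
      exact_mod_cast congrArg (fun n : ℕ => (n : ZMod 2)) hsplit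
    rw [h _ hsm] at hcast
    exact eq_sub_of_add_eq' hcast.symm
  constructor
  · intro s m hm hs hsm hint
    have hcount : pathOnes t s m = m.length - 1 := by
      unfold pathOnes
      have hfe : Finset.filter (fun j => t (s ++ m.take j) = true) (Finset.range (m.length + 1))
          = Finset.Ioo 0 m.length := by
        ext j
        simp only [Finset.mem_filter, Finset.mem_range, Finset.mem_Ioo]
        constructor
        · rintro ⟨hj, hP⟩
          refine ⟨?_, ?_⟩
          · rcases Nat.eq_zero_or_pos j with rfl | hpos
            · simp only [List.take_zero, List.append_nil] at hP
              rw [hs] at hP; exact absurd hP (by simp)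
            · exact hpos
          · rcases Nat.lt_or_ge j m.length with hlt | hge
            · exact hlt
            · have : j = m.length := by omega
              subst this
              rw [List.take_length] at hP
              rw [hsm] at hP; exact absurd hP (by simp)
        · rintro ⟨h1, h2⟩
          exact ⟨by omega, hint j h1 h2⟩
      rw [hfe, Nat.card_Ioo]
      omega
    have hz : ((m.length - 1 : ℕ) : ZMod 2) = 0 := by
      rw [← hcount, key s m hsm, h _ hs, if_neg (by simp [hs])]
      ring
    have hdvd : (2 : ℕ) ∣ (m.length - 1) :=
      (ZMod.natCast_eq_zero_iff _ 2).mp hz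
    exact even_iff_two_dvd.mpr hdvd
  · intro s m1 m2 h1 h2
    have : ((pathOnes t s m1 : ℕ) : ZMod 2) = ((pathOnes t s m2 : ℕ) : ZMod 2) := by
      rw [key s m1 h1, key s m2 h2]
    exact (ZMod.natCast_eq_natCast_iff _ _ _).mp this

lemma shiftW_mem {t : ITree Bool} (ht : t ∈ evenShift) (x : Word) :
    shiftW x t ∈ evenShift := by
  have hpo : ∀ s m : Word, pathOnes (shiftW x t) s m = pathOnes t (x ++ s) m := by
    intro s m
    apply pathOnes_congr
    intro j hj
    simp [shiftW, List.append_assoc]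
  constructor
  · intro s m hm hs hsm hint
    refine ht.1 (x ++ s) m hm hs ?_ ?_
    · rw [List.append_assoc]; exact hsm
    · intro j hj1 hj2
      rw [List.append_assoc]; exact hint j hj1 hj2
  · intro s m1 m2 h1 h2
    rw [hpo, hpo]
    refine ht.2 (x ++ s) m1 m2 ?_ ?_
    · rw [List.append_assoc]; exact h1
    · rw [List.append_assoc]; exact h2

open Classical in
noncomputable def plen (S : Set Word) (w : Word) : ℕ :=
  Nat.findGreatest (fun k => w.take k ∈ S) w.length

attribute [local instance] Classical.propDecidable

lemma plen_le (S : Set Word) (w : Word) : plen S w ≤ w.length := by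
  unfold plen; exact Nat.findGreatest_le _

lemma take_plen_mem {S : Set Word} (h0 : [] ∈ S) (w : Word) : w.take (plen S w) ∈ S := by
  unfold plen
  refine Nat.findGreatest_spec (P := fun k => w.take k ∈ S) (Nat.zero_le _) ?_
  simpa using h0

lemma plen_of_mem {S : Set Word} {w : Word} (h : w ∈ S) : plen S w = w.length := by
  refine le_antisymm (plen_le S w) ?_
  unfold plen
  refine Nat.le_findGreatest (P := fun k => w.take k ∈ S) le_rfl ?_
  simpa using h

lemma drop_plen_eq_nil_iff {S : Set Word} (h0 : [] ∈ S) (w : Word) :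
    w.drop (plen S w) = [] ↔ w ∈ S := by
  constructor
  · intro h
    have h1 : w.length ≤ plen S w := by
      have := List.drop_eq_nil_iff.mp h
      exact this
    have h2 : plen S w = w.length := le_antisymm (plen_le S w) h1
    have h3 := take_plen_mem h0 w
    rwa [h2, List.take_length] at h3
  · intro h; rw [plen_of_mem h, List.drop_length]

lemma plen_leaf {S : Set Word} (hpre : ∀ x ∈ S, ∀ y : Word, y <+: x → y ∈ S)
    {p : Word} (hp : p ∈ S) (hleaf : ∀ i : Bool, p ++ [i] ∉ S)
    {z : Word} (hz : z ≠ []) : plen S (p ++ z) = p.length := by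
  have h0 : [] ∈ S := hpre p hp [] (List.nil_prefix)
  have hge : p.length ≤ plen S (p ++ z) := by
    unfold plen
    refine Nat.le_findGreatest (P := fun k => (p ++ z).take k ∈ S) (by simp) ?_
    show (p ++ z).take p.length ∈ S
    rw [List.take_left]; exact hp
  have hle : plen S (p ++ z) ≤ p.length := by
    by_contra hcon
    push_neg at hcon
    have hspec : (p ++ z).take (plen S (p ++ z)) ∈ S := take_plen_mem h0 _
    have hpref : (p ++ z).take (p.length + 1) <+: (p ++ z).take (plen S (p ++ z)) :=
      List.take_prefix_take_left (by omega)
    have hmem : (p ++ z).take (p.length + 1) ∈ S := hpre _ hspec _ hpref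
    obtain ⟨i, z', rfl⟩ : ∃ i z', z = i :: z' := by
      cases z with
      | nil => exact absurd rfl hz
      | cons i z' => exact ⟨i, z', rfl⟩
    have heq : (p ++ i :: z').take (p.length + 1) = p ++ [i] := by
      rw [List.take_append]
      simp
    rw [heq] at hmem
    exact hleaf i hmem
  omega

def connVal (E c2 : ZMod 2) (k : ℕ) : Bool :=
  if k = 1 then decide (E = 1) else if k = 2 then decide (c2 = 0) else true

open Classical in
noncomputable def glue (S : Set Word) (t1 t2 : ITree Bool) (c c2 : ZMod 2) : ITree Bool :=
  fun w =>
    if w.drop (plen S w) = [] then t1 w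
    else if ∀ i : Bool, (w.take (plen S w)) ++ [i] ∉ S then
      (if (w.drop (plen S w)).length ≤ 3
        then connVal (c + Opar t1 (w.take (plen S w))) c2 (w.drop (plen S w)).length
        else t2 ((w.drop (plen S w)).drop 4))
    else true

lemma glue_of_mem {S : Set Word} {t1 t2 : ITree Bool} {c c2 : ZMod 2}
    (h0 : [] ∈ S) {w : Word} (h : w ∈ S) : glue S t1 t2 c c2 w = t1 w := by
  unfold glue
  rw [if_pos ((drop_plen_eq_nil_iff h0 w).mpr h)]

lemma glue_leaf {S : Set Word} {t1 t2 : ITree Bool} {c c2 : ZMod 2}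
    (hpre : ∀ x ∈ S, ∀ y : Word, y <+: x → y ∈ S)
    {p : Word} (hp : p ∈ S) (hleaf : ∀ i : Bool, p ++ [i] ∉ S)
    {z : Word} (hz : z ≠ []) :
    glue S t1 t2 c c2 (p ++ z) =
      if z.length ≤ 3 then connVal (c + Opar t1 p) c2 z.length else t2 (z.drop 4) := by
  have hplen : plen S (p ++ z) = p.length := plen_leaf hpre hp hleaf hz
  unfold glue
  rw [hplen, List.take_left, List.drop_left, if_neg hz, if_pos hleaf]

lemma Opar_glue_S {S : Set Word} {t1 t2 : ITree Bool} {c c2 : ZMod 2}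
    (hpre : ∀ x ∈ S, ∀ y : Word, y <+: x → y ∈ S) (h0 : [] ∈ S)
    {w : Word} (hw : w ∈ S) : Opar (glue S t1 t2 c c2) w = Opar t1 w := by
  unfold Opar
  congr 1
  apply pathOnes_congr
  intro j hj
  simp only [List.nil_append]
  exact glue_of_mem h0 (hpre w hw _ (List.take_prefix j w))

noncomputable def Gfun (t2 : ITree Bool) (E c2 : ZMod 2) (z : Word) : ZMod 2 :=
  if z.length = 0 then 0
  else if z.length = 1 then E
  else if z.length = 2 then E + 1 + c2
  else if z.length = 3 then E + c2
  else E + c2 + (pathOnes t2 [] (z.drop 4) : ZMod 2)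

lemma Opar_glue_leaf {S : Set Word} {t1 t2 : ITree Bool} {c c2 : ZMod 2}
    (hpre : ∀ x ∈ S, ∀ y : Word, y <+: x → y ∈ S)
    {p : Word} (hp : p ∈ S) (hleaf : ∀ i : Bool, p ++ [i] ∉ S) :
    ∀ z : Word, Opar (glue S t1 t2 c c2) (p ++ z)
      = Opar (glue S t1 t2 c c2) p + Gfun t2 (c + Opar t1 p) c2 z := by
  intro z
  induction z using List.reverseRecOn with
  | nil => simp [Gfun]
  | append_singleton z a ih =>
    have hstep : Opar (glue S t1 t2 c c2) (p ++ (z ++ [a]))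
        = Opar (glue S t1 t2 c c2) (p ++ z) + castB (glue S t1 t2 c c2 (p ++ (z ++ [a]))) := by
      rw [← List.append_assoc]
      exact Opar_snoc _ (p ++ z) a
    have hval : glue S t1 t2 c c2 (p ++ (z ++ [a]))
        = if (z ++ [a]).length ≤ 3 then connVal (c + Opar t1 p) c2 (z ++ [a]).length
          else t2 ((z ++ [a]).drop 4) := glue_leaf hpre hp hleaf (by simp)
    rw [hstep, ih, add_assoc]
    congr 1
    have hlen : (z ++ [a]).length = z.length + 1 := by simp
    rw [hval]
    rcases Nat.lt_or_ge z.length 4 with h4 | h4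
    · interval_cases hzl : z.length
      · obtain rfl : z = [] := List.length_eq_zero_iff.mp hzl
        simp [Gfun, connVal, zmod_aux0]
      · simp only [Gfun, hlen, hzl]
        norm_num [connVal, zmod_aux0']
        try ring
      · simp only [Gfun, hlen, hzl]
        norm_num [connVal, castB]
        linear_combination (ZMod.natCast_self 2)
      · have hdrop : (z ++ [a]).drop 4 = [] := List.drop_eq_nil_of_le (by simp [hzl])
        simp only [Gfun, hlen, hzl, hdrop, pathOnes_nil]
        norm_num [connVal, castB]
    · have hd1 : ¬ (z.length + 1 ≤ 3) := by omega
      have hdrop : (z ++ [a]).drop 4 = z.drop 4 ++ [a] := by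
        rw [List.drop_append, Nat.sub_eq_zero_of_le (by omega : 4 ≤ z.length)]
        simp
      simp only [Gfun, hlen, hdrop, if_neg hd1,
        if_neg (by omega : ¬ z.length + 1 = 0), if_neg (by omega : ¬ z.length + 1 = 1),
        if_neg (by omega : ¬ z.length + 1 = 2), if_neg (by omega : ¬ z.length + 1 = 3),
        if_neg (by omega : ¬ z.length = 0), if_neg (by omega : ¬ z.length = 1),
        if_neg (by omega : ¬ z.length = 2), if_neg (by omega : ¬ z.length = 3)]
      rw [pathOnes_snoc t2 [] (z.drop 4) a]
      simp only [List.nil_append]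
      push_cast
      simp only [castB]
      split <;> ring

lemma zmod_ne_zero : ∀ a : ZMod 2, ¬ a = 0 → a = 1 := by decide

lemma glue_parity {S : Set Word} {t1 t2 : ITree Bool} {c c2 : ZMod 2}
    (hpre : ∀ x ∈ S, ∀ y : Word, y <+: x → y ∈ S) (h0 : [] ∈ S)
    (hc : ∀ y, t1 y = false → Opar t1 y = c)
    (hc2 : ∀ y, t2 y = false → Opar t2 y = c2) :
    ∀ w, glue S t1 t2 c c2 w = false → Opar (glue S t1 t2 c c2) w = c := by
  intro w hw
  by_cases hzS : w ∈ S
  · have hOw : Opar (glue S t1 t2 c c2) w = Opar t1 w := Opar_glue_S hpre h0 hzS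
    rw [glue_of_mem h0 hzS] at hw
    rw [hOw]
    exact hc w hw
  · set p := w.take (plen S w) with hpdef
    set z := w.drop (plen S w) with hzdef
    have hw_eq : p ++ z = w := List.take_append_drop _ _
    have hzne : z ≠ [] := by
      intro h
      exact hzS ((drop_plen_eq_nil_iff h0 w).mp (by rw [hzdef] at h; exact h))
    by_cases hleaf : ∀ i : Bool, p ++ [i] ∉ S
    · have hpS : p ∈ S := take_plen_mem h0 w
      have heval : glue S t1 t2 c c2 w
          = if z.length ≤ 3 then connVal (c + Opar t1 p) c2 z.length else t2 (z.drop 4) := by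
        conv_lhs => rw [← hw_eq]
        exact glue_leaf hpre hpS hleaf hzne
      have hO : Opar (glue S t1 t2 c c2) w
          = Opar (glue S t1 t2 c c2) p + Gfun t2 (c + Opar t1 p) c2 z := by
        conv_lhs => rw [← hw_eq]
        exact Opar_glue_leaf hpre hpS hleaf z
      rw [heval] at hw
      rw [hO, Opar_glue_S hpre h0 hpS]
      rcases Nat.lt_or_ge z.length 4 with h4 | h4
      · have hle : z.length ≤ 3 := by omega
        rw [if_pos hle] at hw
        have h1le : 1 ≤ z.length := by
          rcases Nat.eq_zero_or_pos z.length with h | h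
          · exact absurd (List.length_eq_zero_iff.mp h) hzne
          · exact h
        interval_cases hzl : z.length
        · norm_num [connVal] at hw
          have hE0 : c + Opar t1 p = 0 := zmod_ne_one _ hw
          norm_num [Gfun, hzl]
          exact zmod_aux1 _ _ hE0
        · norm_num [connVal] at hw
          have hc21 : c2 = 1 := zmod_ne_zero _ hw
          norm_num [Gfun, hzl]
          exact zmod_aux2 _ _ _ hc21
        · norm_num [connVal] at hw
      · rw [if_neg (by omega)] at hw
        have hd : Opar t2 (z.drop 4) = c2 := hc2 _ hw
        have hGf : Gfun t2 (c + Opar t1 p) c2 z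
            = (c + Opar t1 p) + c2 + Opar t2 (z.drop 4) := by
          unfold Gfun Opar
          rw [if_neg (by omega), if_neg (by omega), if_neg (by omega), if_neg (by omega)]
        rw [hGf]
        exact zmod_aux3 _ _ _ _ hd
    · have htrue : glue S t1 t2 c c2 w = true := by
        unfold glue
        rw [← hpdef, ← hzdef, if_neg hzne, if_neg hleaf]
      rw [htrue] at hw
      exact absurd hw (by simp)

lemma mem_fullCode {w : Word} {n : ℕ} : w ∈ fullCode n ↔ w.length = n := by
  unfold fullCode
  simp only [Finset.mem_image, Finset.mem_univ, true_and]
  constructor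
  · rintro ⟨f, rfl⟩
    simp
  · rintro rfl
    exact ⟨w.get, List.ofFn_get w⟩

lemma cpc4 : IsCPC (fullCode 4) := by
  refine ⟨?_, ?_, ?_⟩
  · intro h
    have := mem_fullCode.mp h
    simp at this
  · intro p hp q hq hpq
    exact hpq.eq_of_length (by rw [mem_fullCode.mp hp, mem_fullCode.mp hq])
  · intro x hx
    have hmem : (List.replicate 4 false : Word) ∈ fullCode 4 :=
      mem_fullCode.mpr (List.length_replicate (n := 4) (a := false))
    have h4 : 4 ≤ (fullCode 4).sup List.length := by
      have := Finset.le_sup (f := List.length) hmem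
      rwa [List.length_replicate] at this
    have hx4 : 4 ≤ x.length := le_trans h4 hx
    refine ⟨x.take 4, mem_fullCode.mpr ?_, List.take_prefix 4 x⟩
    rw [List.length_take]
    omega

end Even16

/-- the even tree-shift is uniformly strongly irreducible with
complete prefix code Σ^4: any two accepted patterns are connected through Σ^4. -/
theorem stmt16 :
    UniformlyStronglyIrreducible evenShift ∧
    IsCPC (fullCode 4) ∧
    ∀ u v : Pattern Bool, GoodPattern evenShift u → GoodPattern evenShift v →
      ConnectedThrough evenShift (fullCode 4) u v := by
  classical
  have main : ∀ u v : Pattern Bool, GoodPattern evenShift u → GoodPattern evenShift v →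
      ConnectedThrough evenShift (fullCode 4) u v := by
    rintro u v ⟨hufin, hupre, t1, ht1, x1, hx1⟩ ⟨hvfin, hvpre, t2, ht2, x2, hx2⟩
    have ht1' : shiftW x1 t1 ∈ evenShift := Even16.shiftW_mem ht1 x1
    have ht2' : shiftW x2 t2 ∈ evenShift := Even16.shiftW_mem ht2 x2
    set t1' : ITree Bool := shiftW x1 t1 with ht1def
    set t2' : ITree Bool := shiftW x2 t2 with ht2def
    have hval1 : ∀ y ∈ u.supp, u.val y = t1' y := fun y hy => hx1 y hy
    have hval2 : ∀ y ∈ v.supp, v.val y = t2' y := fun y hy => hx2 y hy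
    rcases Set.eq_empty_or_nonempty u.supp with hSe | hSne
    · refine ⟨t2', ht2', ?_, ?_⟩
      · intro y hy
        rw [hSe] at hy
        exact absurd hy (Set.notMem_empty y)
      · intro w hw
        have : w ∈ u.supp := hw.1
        rw [hSe] at this
        exact absurd this (Set.notMem_empty w)
    · have h0 : [] ∈ u.supp := hupre _ hSne.some_mem [] List.nil_prefix
      set c : ZMod 2 := if h : ∃ y, t1' y = false then Even16.Opar t1' h.choose else 0 with hcdef
      set c2 : ZMod 2 := if h : ∃ y, t2' y = false then Even16.Opar t2' h.choose else 0 with hc2def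
      have hc : ∀ y, t1' y = false → Even16.Opar t1' y = c := by
        intro y hy
        rw [hcdef, dif_pos ⟨y, hy⟩]
        exact Even16.Opar_eq_of_mem ht1' hy (Exists.choose_spec (⟨y, hy⟩ : ∃ y, t1' y = false))
      have hc2 : ∀ y, t2' y = false → Even16.Opar t2' y = c2 := by
        intro y hy
        rw [hc2def, dif_pos ⟨y, hy⟩]
        exact Even16.Opar_eq_of_mem ht2' hy (Exists.choose_spec (⟨y, hy⟩ : ∃ y, t2' y = false))
      set g : ITree Bool := Even16.glue u.supp t1' t2' c c2 with hgdef
      have hgmem : g ∈ evenShift :=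
        Even16.mem_of_parity (Even16.glue_parity hupre h0 hc hc2)
      refine ⟨g, hgmem, ?_, ?_⟩
      · intro y hy
        rw [hgdef, Even16.glue_of_mem h0 hy, ← hval1 y hy]
      · intro w hw x hx y hy
        have hx4 : x.length = 4 := Even16.mem_fullCode.mp hx
        have hzne : x ++ y ≠ [] := by
          intro h
          have := congrArg List.length h
          simp [hx4] at this
        have hassoc : w ++ x ++ y = w ++ (x ++ y) := List.append_assoc w x y
        have heval : g (w ++ x ++ y) = t2' ((x ++ y).drop 4) := by
          rw [hgdef, hassoc, Even16.glue_leaf hupre hw.1 hw.2 hzne,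
            if_neg (by rw [List.length_append, hx4]; omega)]
        have hdy : (x ++ y).drop 4 = y := by
          rw [← hx4, List.drop_left]
        rw [heval, hdy, ← hval2 y hy]
  exact ⟨⟨4, Even16.cpc4, main⟩, Even16.cpc4, main⟩
end
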